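/- Let α, β, s be real numbers with α ≥ 3, β ≥ 1, and s ≥ 1. Then h(α,β,s) ≤ g(α,β,s) or h(α,β,s−1) ≤ g(α,β,s). -/

import Mathlib

/-- `g(α,β,s) = αs + (β + 1 - s)/(2s)`, the throttling value when `s` vertices are chosen
from each leg of a balanced spider and the center is not chosen. -/
noncomputable def gF (α β s : ℝ) : ℝ := α * s + (β + 1 - s) / (2 * s)

/-- `h(α,β,s) = 1 + αs + (β - s)/(2s + 1)`, the throttling value when `s` vertices are chosen
from each leg of a balanced spider together with the center. -/
noncomputable def hF (α β s : ℝ) : ℝ := 1 + α * s + (β - s) / (2 * s + 1)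

/-- For real `α ≥ 3`, `β ≥ 1`, `s ≥ 1`: `h(α,β,s) ≤ g(α,β,s)` or `h(α,β,s-1) ≤ g(α,β,s)`. -/
theorem stmt7 (α β s : ℝ) (hα : 3 ≤ α) (hβ : 1 ≤ β) (hs : 1 ≤ s) :
    hF α β s ≤ gF α β s ∨ hF α β (s - 1) ≤ gF α β s := by
  have h1 : (0:ℝ) < 2*s := by linarith
  have h2 : (0:ℝ) < 2*s+1 := by linarith
  have h3 : (0:ℝ) < 2*s-1 := by linarith
  rcases le_total (4*s^2) (β+1-s) with hc|hc
  · left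
    unfold gF hF
    rw [← sub_nonneg]
    have e : (α*s + (β+1-s)/(2*s)) - (1+α*s+(β-s)/(2*s+1))
        = ((β+1-s) - 4*s^2)/((2*s)*(2*s+1)) := by
      field_simp; ring
    rw [e]
    exact div_nonneg (by linarith) (by positivity)
  · right
    unfold gF hF
    rw [← sub_nonneg]
    have e : (α*s + (β+1-s)/(2*s)) - (1+α*(s-1)+(β-(s-1))/(2*(s-1)+1))
        = ((α-1)*(2*s)*(2*s-1) - (β+1-s))/((2*s)*(2*s-1)) := by
      have : 2*(s-1)+1 = 2*s-1 := by ring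
      rw [this]
      have hD : (2*s)*(2*s-1) ≠ 0 := by positivity
      calc (α*s + (β+1-s)/(2*s)) - (1+α*(s-1)+(β-(s-1))/(2*s-1))
          = (α-1) + (β+1-s)*(1/(2*s) - 1/(2*s-1)) := by ring
        _ = _ := by
          rw [div_sub_div _ _ h1.ne' h3.ne', eq_div_iff hD, add_mul, mul_assoc (β+1-s), div_mul_cancel₀ _ hD]
          ring
    rw [e]
    apply div_nonneg _ (by positivity)
    nlinarith [mul_nonneg (mul_nonneg (by linarith : (0:ℝ) ≤ α-3) h1.le) h3.le,
      mul_nonneg (by linarith : (0:ℝ) ≤ s-1) (by linarith : (0:ℝ) ≤ s)]
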